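/- arXiv:2405.07020 — 3 statements merged into one kernel-verified Lean document; each statement's English description precedes it below -/
import Mathlib

section
/- For real numbers a, b with 0 < b ≤ a ≤ 1, we have ln(a/b) ≥ (a-b)/a + (a-b)²/2. -/
theorem log_div_ge (a b : ℝ) (hb : 0 < b) (hba : b ≤ a) (ha : a ≤ 1) :
    Real.log (a / b) ≥ (a - b) / a + (a - b) ^ 2 / 2 := by
  have ha0 : 0 < a := lt_of_lt_of_le hb hba
  set g : ℝ → ℝ := fun t => Real.log a - Real.log t - (a - t) / a - (a - t) ^ 2 / 2 with hg
  have hd : ∀ t : ℝ, 0 < t → HasDerivAt g (-(1 / t) + 1 / a + (a - t)) t := by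
    intro t ht0
    have h1 : HasDerivAt (fun t : ℝ => Real.log a - Real.log t) (-(1 / t)) t := by
      simpa using ((Real.hasDerivAt_log ht0.ne').const_sub (Real.log a))
    have h2 : HasDerivAt (fun t : ℝ => (a - t) / a) (-1 / a) t := by
      have : HasDerivAt (fun t : ℝ => a - t) (-1) t := by
        simpa using (hasDerivAt_id t).const_sub a
      exact this.div_const a
    have h3 : HasDerivAt (fun t : ℝ => (a - t) ^ 2 / 2) (-(a - t)) t := by
      have h : HasDerivAt (fun t : ℝ => a - t) (-1) t := by
        simpa using (hasDerivAt_id t).const_sub a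
      exact ((h.pow 2).div_const 2).congr_deriv (by ring)
    have := (h1.sub h2).sub h3
    exact this.congr_deriv (by ring)
  have key : AntitoneOn g (Set.Icc b a) := by
    apply antitoneOn_of_deriv_nonpos (convex_Icc b a)
    · apply ContinuousOn.sub
      apply ContinuousOn.sub
      apply ContinuousOn.sub
      · exact continuousOn_const
      · exact Real.continuousOn_log.mono (fun x hx => ne_of_gt (lt_of_lt_of_le hb hx.1))
      · fun_prop
      · fun_prop
    · intro t ht
      rw [interior_Icc] at ht
      have ht0 : 0 < t := lt_of_lt_of_le hb ht.1.le
      exact (hd t ht0).differentiableAt.differentiableWithinAt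
    · intro t ht
      rw [interior_Icc] at ht
      have ht0 : 0 < t := lt_of_lt_of_le hb ht.1.le
      rw [(hd t ht0).deriv]
      have hat : a * t ≤ 1 := by nlinarith [ht.2]
      have hat0 : 0 < a * t := mul_pos ha0 ht0
      rw [show -(1 / t) + 1 / a + (a - t) = ((t - a) * (1 - a * t)) / (a * t) by
        field_simp; ring]
      apply div_nonpos_of_nonpos_of_nonneg _ hat0.le
      nlinarith [ht.2]
  have h := key (Set.left_mem_Icc.2 hba) (Set.right_mem_Icc.2 hba) hba
  have hga : g a = 0 := by simp [hg]
  have hgb : g b = Real.log a - Real.log b - (a - b) / a - (a - b) ^ 2 / 2 := rfl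
  rw [Real.log_div ha0.ne' hb.ne']
  rw [hga, hgb] at h
  linarith
end

section
/- With the randomized response kernel g of the previous context (subset S of size k, parameters ε₁, ε₂ > 0 with ε₁ ≤ ε and ε₂ ≤ ε), for all x ∈ S, x' ∉ S and y ∉ S with y ≠ x', the ratio g(y|x)/g(y|x') = (e^{ε₂} + K − k − 1)/((K−k) e^{ε₁}) satisfies e^{−ε} ≤ g(y|x)/g(y|x') ≤ e^{ε}. -/
open Real

noncomputable def rrrrKernel (K k : ℕ) (S : Finset (Fin K)) (ε₁ ε₂ : ℝ)
    (y x : Fin K) : ℝ :=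
  if x ∈ S then
    if y ∈ S then
      (if x = y then exp ε₁ else 1) / (exp ε₁ + k)
    else
      (1 / ((K : ℝ) - k)) * (1 / (exp ε₁ + k))
  else
    if y ∈ S then
      1 / (exp ε₁ + k)
    else
      ((if x = y then exp ε₂ else 1) / (exp ε₂ + ((K : ℝ) - k - 1))) *
        (exp ε₁ / (exp ε₁ + k))

theorem rrrrKernel_ratio_case_C4 (K k : ℕ) (hk : 0 < k) (hkK : k < K)
    (S : Finset (Fin K)) (hS : S.card = k) (ε ε₁ ε₂ : ℝ) (hε : 0 < ε)
    (hε₁ : 0 < ε₁) (hε₁ε : ε₁ ≤ ε) (hε₂ : 0 < ε₂) (hε₂ε : ε₂ ≤ ε)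
    (x x' y : Fin K) (hx : x ∈ S) (hx' : x' ∉ S) (hy : y ∉ S) (hyx' : y ≠ x') :
    rrrrKernel K k S ε₁ ε₂ y x / rrrrKernel K k S ε₁ ε₂ y x'
      = (exp ε₂ + ((K : ℝ) - k - 1)) / (((K : ℝ) - k) * exp ε₁) ∧
    exp (-ε) ≤ rrrrKernel K k S ε₁ ε₂ y x / rrrrKernel K k S ε₁ ε₂ y x' ∧
    rrrrKernel K k S ε₁ ε₂ y x / rrrrKernel K k S ε₁ ε₂ y x' ≤ exp ε := by
  have hx'y : x' ≠ y := fun h => hyx' h.symm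
  have hm : (1 : ℝ) ≤ (K : ℝ) - k := by
    have : (k : ℝ) + 1 ≤ (K : ℝ) := by exact_mod_cast hkK
    linarith
  have hm0 : (0 : ℝ) < (K : ℝ) - k := by linarith
  have h1 : (1 : ℝ) ≤ exp ε₁ := one_le_exp hε₁.le
  have h2 : (1 : ℝ) ≤ exp ε₂ := one_le_exp hε₂.le
  have h1e : exp ε₁ ≤ exp ε := exp_le_exp.mpr hε₁ε
  have h2e : exp ε₂ ≤ exp ε := exp_le_exp.mpr hε₂ε
  have hd1 : (0 : ℝ) < exp ε₁ + k := by positivity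
  have hd2 : (0 : ℝ) < exp ε₂ + ((K : ℝ) - k - 1) := by
    have := exp_pos ε₂; linarith
  have heq : rrrrKernel K k S ε₁ ε₂ y x / rrrrKernel K k S ε₁ ε₂ y x'
      = (exp ε₂ + ((K : ℝ) - k - 1)) / (((K : ℝ) - k) * exp ε₁) := by
    simp only [rrrrKernel, if_pos hx, if_neg hy, if_neg hx', if_neg hx'y]
    field_simp
  refine ⟨heq, ?_, ?_⟩ <;> rw [heq]
  · rw [exp_neg, inv_le_iff_one_le_mul₀ (exp_pos ε), div_mul_eq_mul_div,
      le_div_iff₀ (by positivity)]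
    nlinarith [exp_pos ε]
  · rw [div_le_iff₀ (by positivity)]
    have hε' : (1:ℝ) ≤ exp ε := one_le_exp hε.le
    nlinarith [mul_nonneg (by linarith : (0:ℝ) ≤ (K:ℝ) - k - 1)
        (by linarith : (0:ℝ) ≤ exp ε - 1),
      mul_nonneg (mul_pos (exp_pos ε) hm0).le (by linarith : (0:ℝ) ≤ exp ε₁ - 1)]
end

section
/- Let K > k ≥ 1 be integers and ε, ε₁ > 0 with ε₁ ≤ ε and e^{ε₁−ε}(K−k) − 1 > 0. If ε₂ > 0 satisfies e^{ε₂} ≤ (K−k−1)/(e^{ε₁−ε}(K−k) − 1), then (e^{ε₂} + K − k − 1)/((K−k) e^{ε₁+ε₂}) ≥ e^{−ε}. Moreover, (e^{ε₂} + K − k − 1)/((K−k) e^{ε₁+ε₂}) ≤ 1 always holds. -/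
open Real

theorem privacy_bound_case_C3 (K k : ℕ) (hk : 1 ≤ k) (hkK : k < K)
    (ε ε₁ ε₂ : ℝ) (hε : 0 < ε) (hε₁ : 0 < ε₁) (hε₁ε : ε₁ ≤ ε) (hε₂ : 0 < ε₂)
    (hpos : exp (ε₁ - ε) * ((K : ℝ) - k) - 1 > 0)
    (hbound : exp ε₂ ≤ ((K : ℝ) - k - 1) / (exp (ε₁ - ε) * ((K : ℝ) - k) - 1)) :
    exp (-ε) ≤ (exp ε₂ + ((K : ℝ) - k - 1)) / (((K : ℝ) - k) * exp (ε₁ + ε₂)) ∧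
    (exp ε₂ + ((K : ℝ) - k - 1)) / (((K : ℝ) - k) * exp (ε₁ + ε₂)) ≤ 1 := by
  set A : ℝ := (K : ℝ) - k with hA
  have hA1 : 1 ≤ A := by
    have : (k : ℝ) + 1 ≤ K := by exact_mod_cast hkK
    linarith
  have hD : 0 < A * exp (ε₁ + ε₂) := by positivity
  have hkey : exp ε₂ * (exp (ε₁ - ε) * A - 1) ≤ A - 1 :=
    (le_div_iff₀ hpos).mp hbound
  have he1 : exp (ε₁ + ε₂) = exp ε₁ * exp ε₂ := exp_add _ _
  have he2 : exp (ε₁ - ε) = exp ε₁ / exp ε := exp_sub _ _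
  have hεpos : 0 < exp ε := exp_pos _
  constructor
  · rw [le_div_iff₀ hD]
    have heq : exp (-ε) * (A * exp (ε₁ + ε₂)) = exp (ε₁ - ε) * A * exp ε₂ := by
      rw [he1, he2, exp_neg]
      field_simp
    rw [heq]
    nlinarith [hkey]
  · rw [div_le_one hD, he1]
    have h1 : 1 ≤ exp ε₂ := one_le_exp (le_of_lt hε₂)
    have h2 : 1 ≤ exp ε₁ := one_le_exp (le_of_lt hε₁)
    nlinarith [mul_nonneg (sub_nonneg.mpr hA1) (sub_nonneg.mpr h1),
      mul_nonneg (mul_nonneg (by linarith : (0:ℝ) ≤ A) (by linarith : (0:ℝ) ≤ exp ε₂)) (sub_nonneg.mpr h2)]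
end
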